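/- Proposition 3.3 (structure of the rational spectral curve): let x₁,…,x_N ∈ ℂ be pairwise distinct, p₁,…,p_N ∈ ℂ, and a_i, b_i ∈ ℂˡ with b_i·a_i = 2. Set F_{ij} = b_i·a_j and define A by A_{ii} = p_i, A_{ij} = F_{ij}/(x_i − x_j) (i ≠ j). Then there exist polynomials R₀, R₁, …, R_l ∈ ℂ[k] with deg R_m ≤ N − m such that for all k, w ∈ ℂ one has det(2k·I + A − w·F) = Σ_{m=0}^{l} wᵐ·R_m(k), with R₀(k) = det(2k·I + A), and moreover R₁ = −dR₀/dk. -/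

import Mathlib

open Matrix Finset Polynomial

namespace RSC

/-- total-degree predicate on bivariate polynomials `ℂ[X][Y]`. -/
def TD (P : Polynomial (Polynomial ℂ)) (n : ℕ) : Prop :=
  ∀ m c : ℕ, n < m + c → (P.coeff m).coeff c = 0

lemma TD.mul {P Q : Polynomial (Polynomial ℂ)} {n n' : ℕ}
    (hP : TD P n) (hQ : TD Q n') : TD (P * Q) (n + n') := by
  intro m c h
  rw [Polynomial.coeff_mul, Polynomial.finset_sum_coeff]
  refine Finset.sum_eq_zero fun uv huv => ?_
  rw [Polynomial.coeff_mul]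
  refine Finset.sum_eq_zero fun cd hcd => ?_
  rw [Finset.HasAntidiagonal.mem_antidiagonal] at huv hcd
  rcases lt_or_ge n (uv.1 + cd.1) with h1 | h1
  · rw [hP _ _ h1, zero_mul]
  · rw [hQ _ _ (by omega), mul_zero]

lemma TD.one : TD 1 0 := by
  intro m c h
  simp only [Polynomial.coeff_one]
  split_ifs with hm
  · subst hm
    simp only [Polynomial.coeff_one, if_neg (by omega : ¬ c = 0)]
  · simp

lemma TD.zsmul {P : Polynomial (Polynomial ℂ)} {n : ℕ} (z : ℤˣ)
    (h : TD P n) : TD (z • P) n := by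
  intro m c hmc
  rw [Polynomial.coeff_smul, Polynomial.coeff_smul, h _ _ hmc, smul_zero]

lemma TD.prod {ι : Type*} {f : ι → Polynomial (Polynomial ℂ)} :
    ∀ {s : Finset ι}, (∀ i ∈ s, TD (f i) 1) → TD (∏ i ∈ s, f i) s.card := by
  classical
  intro s
  induction s using Finset.induction_on with
  | empty => intro _; simpa using TD.one
  | @insert a s' hi ih =>
    intro h
    rw [Finset.prod_insert hi, Finset.card_insert_of_notMem hi, Nat.add_comm]
    exact TD.mul (h a (Finset.mem_insert_self a s'))
      (ih fun i his => h i (Finset.mem_insert_of_mem his))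

lemma TD.det {N : ℕ} {M : Matrix (Fin N) (Fin N) (Polynomial (Polynomial ℂ))}
    (h : ∀ i j, TD (M i j) 1) : TD M.det N := by
  rw [Matrix.det_apply]
  intro m c hmc
  simp only [Polynomial.finset_sum_coeff]
  refine Finset.sum_eq_zero fun σ _ => ?_
  have hprod := TD.prod (s := (Finset.univ : Finset (Fin N)))
    (f := fun i : Fin N => M (σ i) i) (fun i _ => h (σ i) i)
  rw [Finset.card_univ, Fintype.card_fin] at hprod
  exact (TD.zsmul (Equiv.Perm.sign σ) hprod) m c hmc

lemma natDegree_det_le {n : Type*} [DecidableEq n] [Fintype n] {R : Type*} [CommRing R]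
    (M : Matrix n n (Polynomial R)) (d : n → ℕ) (h : ∀ i j, (M i j).natDegree ≤ d i) :
    M.det.natDegree ≤ ∑ i, d i := by
  rw [Matrix.det_apply]
  refine Polynomial.natDegree_sum_le_of_forall_le _ _ fun σ _ => ?_
  rw [Units.smul_def, zsmul_eq_mul]
  refine le_trans Polynomial.natDegree_mul_le ?_
  rw [Polynomial.natDegree_intCast, Nat.zero_add]
  refine le_trans (Polynomial.natDegree_prod_le _ _) ?_
  calc ∑ i, (M (σ i) i).natDegree ≤ ∑ i, d (σ i) :=
        Finset.sum_le_sum fun i _ => h (σ i) i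
    _ = ∑ i, d i := Equiv.sum_comp σ d

lemma dvd_prod_sub {R : Type*} [CommRing R] (q : R) {ι : Type*} {f g : ι → R} :
    ∀ {s : Finset ι}, (∀ i ∈ s, q ∣ f i - g i) →
      q ∣ (∏ i ∈ s, f i) - (∏ i ∈ s, g i) := by
  classical
  intro s
  induction s using Finset.induction_on with
  | empty => simp
  | @insert a s' ha ih =>
    intro h
    rw [Finset.prod_insert ha, Finset.prod_insert ha]
    have hsplit : f a * (∏ i ∈ s', f i) - g a * (∏ i ∈ s', g i)
        = f a * ((∏ i ∈ s', f i) - (∏ i ∈ s', g i)) + (f a - g a) * (∏ i ∈ s', g i) := by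
      ring
    rw [hsplit]
    exact dvd_add
      (Dvd.dvd.mul_left (ih fun i hi => h i (Finset.mem_insert_of_mem hi)) _)
      (Dvd.dvd.mul_right (h a (Finset.mem_insert_self a s')) _)

lemma dvd_det_sub {R : Type*} [CommRing R] {n : Type*} [DecidableEq n] [Fintype n]
    (q : R) (M M' : Matrix n n R) (h : ∀ i j, q ∣ M i j - M' i j) :
    q ∣ M.det - M'.det := by
  rw [Matrix.det_apply, Matrix.det_apply, ← Finset.sum_sub_distrib]
  refine Finset.dvd_sum fun σ _ => ?_
  rw [← smul_sub, Units.smul_def, zsmul_eq_mul]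
  exact Dvd.dvd.mul_left (dvd_prod_sub q fun i _ => h (σ i) i) _

end RSC

namespace RSC

/-- substitution `X ↦ X - Y` as a map `ℂ[X] → ℂ[X][Y]`. -/
noncomputable def chi : Polynomial ℂ →+* Polynomial (Polynomial ℂ) :=
  Polynomial.eval₂RingHom (Polynomial.C.comp Polynomial.C)
    (Polynomial.C Polynomial.X - Polynomial.X)

lemma chi_C (c : ℂ) : chi (Polynomial.C c) = Polynomial.C (Polynomial.C c) := by
  simp [chi]

lemma chi_X : chi Polynomial.X = Polynomial.C Polynomial.X - Polynomial.X := by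
  simp [chi]

lemma chi_coeff_zero (P : Polynomial ℂ) : (chi P).coeff 0 = P := by
  have h : (Polynomial.constantCoeff).comp chi = RingHom.id (Polynomial ℂ) := by
    apply Polynomial.ringHom_ext
    · intro c; simp [chi_C]
    · simp [chi_X]
  calc (chi P).coeff 0 = Polynomial.constantCoeff (chi P) := rfl
    _ = P := by rw [← RingHom.comp_apply, h, RingHom.id_apply]

lemma chi_coeff_one (P : Polynomial ℂ) :
    (chi P).coeff 1 = -Polynomial.derivative P := by
  induction P using Polynomial.induction_on with
  | C c => simp [chi_C, Polynomial.coeff_C]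
  | add p q hp hq =>
    simp only [map_add, Polynomial.coeff_add, hp, hq, map_add]
    ring
  | monomial n c ih =>
    have h1 : (Polynomial.C c : Polynomial ℂ) * Polynomial.X ^ (n + 1)
        = (Polynomial.C c * Polynomial.X ^ n) * Polynomial.X := by ring
    rw [h1, _root_.map_mul, chi_X, mul_sub, Polynomial.coeff_sub]
    have hA : (chi (Polynomial.C c * Polynomial.X ^ n) * Polynomial.C Polynomial.X).coeff 1
        = (chi (Polynomial.C c * Polynomial.X ^ n)).coeff 1 * Polynomial.X :=
      Polynomial.coeff_mul_C _ _ _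
    have hB : (chi (Polynomial.C c * Polynomial.X ^ n) * Polynomial.X).coeff 1
        = (chi (Polynomial.C c * Polynomial.X ^ n)).coeff 0 :=
      Polynomial.coeff_mul_X _ 0
    rw [hA, hB, ih, chi_coeff_zero]
    simp only [Polynomial.derivative_mul, Polynomial.derivative_X, Polynomial.derivative_C]
    ring

end RSC

open RSC in
theorem rational_spectral_curve (N l : ℕ) (hl : 1 ≤ l)
    (x p : Fin N → ℂ) (a b : Fin N → Fin l → ℂ)
    (hx : ∀ i j : Fin N, i ≠ j → x i ≠ x j)
    (hba : ∀ i : Fin N, (∑ α : Fin l, b i α * a i α) = 2) :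
    let F : Matrix (Fin N) (Fin N) ℂ := Matrix.of fun i j => ∑ α : Fin l, b i α * a j α
    let A : Matrix (Fin N) (Fin N) ℂ :=
      Matrix.of fun i j => if i = j then p i else F i j / (x i - x j)
    ∃ R : Fin (l + 1) → Polynomial ℂ,
      (∀ m : Fin (l + 1), (R m).degree ≤ (N - (m : ℕ) : ℕ)) ∧
      (∀ k : ℂ, (R 0).eval k = (Matrix.diagonal (fun _ => 2 * k) + A).det) ∧
      (∀ k w : ℂ,
        (Matrix.diagonal (fun _ => 2 * k) + A - w • F).det
          = ∑ m : Fin (l + 1), w ^ (m : ℕ) * (R m).eval k) ∧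
      R ⟨1, by omega⟩ = -Polynomial.derivative (R 0) := by
  intro F A
  classical
  have hFa : ∀ i j, F i j = ∑ α : Fin l, b i α * a j α := fun _ _ => rfl
  have hAa : ∀ i j, A i j = if i = j then p i else F i j / (x i - x j) := fun _ _ => rfl
  -- the matrix 2kI + A, with k the polynomial variable
  set Mk : Matrix (Fin N) (Fin N) (Polynomial ℂ) :=
    Matrix.of (fun i j => if i = j then Polynomial.C (p i) + Polynomial.C 2 * Polynomial.X
      else Polynomial.C (A i j)) with hMk
  -- the matrix 2kI + A - wF over ℂ[k][w]
  set big : Matrix (Fin N) (Fin N) (Polynomial (Polynomial ℂ)) :=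
    Matrix.of (fun i j => Polynomial.C (Mk i j)
      - Polynomial.C (Polynomial.C (F i j)) * Polynomial.X) with hbig
  set D : Polynomial (Polynomial ℂ) := big.det with hD
  have hMkd : ∀ i, Mk i i = Polynomial.C (p i) + Polynomial.C 2 * Polynomial.X := by
    intro i; simp [hMk]
  have hMko : ∀ i j, i ≠ j → Mk i j = Polynomial.C (A i j) := by
    intro i j hij; simp [hMk, hij]
  have hbig' : ∀ i j, big i j
      = Polynomial.C (Mk i j) - Polynomial.C (Polynomial.C (F i j)) * Polynomial.X := by
    intro i j; simp [hbig]
  clear_value F A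
  -- total degree bound
  have hbigTD : ∀ i j, TD (big i j) 1 := by
    intro i j m c h
    have hMkc : ∀ c' : ℕ, 2 ≤ c' → (Mk i j).coeff c' = 0 := by
      intro c' hc'
      have h0 : ¬ c' = 0 := by omega
      have h1 : ¬ 1 = c' := by omega
      by_cases hij : i = j <;>
        simp [hMk, hij, Polynomial.coeff_add, Polynomial.coeff_C, Polynomial.coeff_C_mul,
          Polynomial.coeff_X, h0, h1]
    rcases m with _ | m
    · have hc2 : c ≥ 2 := by omega
      simp [hbig, Polynomial.coeff_sub, Polynomial.coeff_C, Polynomial.coeff_C_mul,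
        Polynomial.coeff_X, hMkc c hc2]
    rcases m with _ | m
    · have hc1 : ¬ c = 0 := by omega
      simp [hbig, Polynomial.coeff_sub, Polynomial.coeff_C, Polynomial.coeff_C_mul,
        Polynomial.coeff_X, hc1]
    · simp [hbig, Polynomial.coeff_sub, Polynomial.coeff_C, Polynomial.coeff_C_mul,
        Polynomial.coeff_X]
  have htd : TD D N := TD.det hbigTD
  -- Y-degree bound via block matrices
  have hdegY : D.natDegree ≤ l := by
    set Bm : Matrix (Fin N) (Fin l) (Polynomial (Polynomial ℂ)) :=
      Matrix.of (fun i α => Polynomial.C (Polynomial.C (b i α))) with hBm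
    set Cm : Matrix (Fin l) (Fin N) (Polynomial (Polynomial ℂ)) :=
      Matrix.of (fun α j => Polynomial.C (Polynomial.C (a j α)) * Polynomial.X) with hCm
    have hBC : big = Mk.map Polynomial.C - Bm * Cm := by
      ext i j : 2
      simp only [hbig, Matrix.of_apply, Matrix.sub_apply, Matrix.map_apply, Matrix.mul_apply,
        hBm, hCm]
      rw [hFa i j]
      simp [Finset.sum_mul, _root_.map_sum, _root_.map_mul, mul_assoc]
    have hblock : D = (Matrix.fromBlocks (Mk.map Polynomial.C) Bm Cm 1).det := by
      rw [hD, hBC, Matrix.det_fromBlocks_one₂₂]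
    rw [hblock]
    have hle := natDegree_det_le (Matrix.fromBlocks (Mk.map Polynomial.C) Bm Cm 1)
      (Sum.elim (fun _ => 0) (fun _ => 1)) ?_
    · refine le_trans hle ?_
      simp [Fintype.sum_sum_type]
    · rintro (i | i) (j | j)
      · simp [Matrix.fromBlocks_apply₁₁]
      · simp [hBm, Matrix.fromBlocks_apply₁₂]
      · refine le_trans (Polynomial.natDegree_mul_le) ?_
        simp [hCm, Matrix.fromBlocks_apply₂₁]
      · simp only [Matrix.fromBlocks_apply₂₂, Matrix.one_apply]
        split_ifs <;> simp
  -- identification of the constant coefficient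
  have hD0 : D.coeff 0 = Mk.det := by
    have h1 : D.coeff 0 = Polynomial.constantCoeff D := rfl
    rw [h1, hD, RingHom.map_det]
    congr 1
    ext i j : 2
    simp [hbig, RingHom.mapMatrix_apply, Matrix.map_apply, Polynomial.constantCoeff_apply,
      Polynomial.coeff_sub, Polynomial.coeff_C, Polynomial.coeff_C_mul, Polynomial.coeff_X]
  refine ⟨fun m => D.coeff (m : ℕ), ?_, ?_, ?_, ?_⟩
  · -- degree bounds
    intro m
    rw [Polynomial.degree_le_iff_coeff_zero]
    intro c hc
    have hc' : N - (m : ℕ) < c := by exact_mod_cast hc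
    exact htd (m : ℕ) c (by omega)
  · -- R₀ evaluation
    intro k
    have h0 : ((0 : Fin (l + 1)) : ℕ) = 0 := rfl
    show Polynomial.eval k (D.coeff ((0 : Fin (l + 1)) : ℕ)) = _
    rw [h0, hD0, show (Polynomial.eval k Mk.det) = (Polynomial.evalRingHom k) Mk.det from rfl,
      RingHom.map_det]
    congr 1
    ext i j : 2
    by_cases hij : i = j
    · subst hij
      simp [hMk, RingHom.mapMatrix_apply, Matrix.map_apply, Matrix.add_apply,
        Matrix.diagonal_apply_eq, hAa i i]
      ring
    · simp [hMk, hij, RingHom.mapMatrix_apply, Matrix.map_apply, Matrix.add_apply,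
        Matrix.diagonal_apply_ne _ hij]
  · -- evaluation identity
    intro k w
    set ψ : Polynomial (Polynomial ℂ) →+* ℂ :=
      (Polynomial.evalRingHom w).comp (Polynomial.mapRingHom (Polynomial.evalRingHom k)) with hψ
    have hψD : ψ D = (Matrix.diagonal (fun _ => 2 * k) + A - w • F).det := by
      rw [hD, RingHom.map_det]
      congr 1
      ext i j : 2
      have : ψ (big i j) = Polynomial.eval k (Mk i j) - F i j * w := by
        simp [hψ, hbig, Polynomial.coe_evalRingHom]
      rw [RingHom.mapMatrix_apply, Matrix.map_apply, this]
      by_cases hij : i = j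
      · subst hij
        simp [hMk, Matrix.sub_apply, Matrix.add_apply, Matrix.diagonal_apply_eq,
          Matrix.smul_apply, hAa i i, smul_eq_mul]
        ring
      · simp [hMk, hij, Matrix.sub_apply, Matrix.add_apply,
          Matrix.diagonal_apply_ne _ hij, Matrix.smul_apply, smul_eq_mul]
        ring
    have hψD' : ψ D = ∑ m ∈ Finset.range (l + 1), Polynomial.eval k (D.coeff m) * w ^ m := by
      have h1 : ψ D = Polynomial.eval w (D.map (Polynomial.evalRingHom k)) := rfl
      rw [h1, Polynomial.eval_eq_sum_range'
        (lt_of_le_of_lt (le_trans Polynomial.natDegree_map_le hdegY) (Nat.lt_succ_self l))]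
      refine Finset.sum_congr rfl fun m _ => ?_
      rw [Polynomial.coeff_map]
      rfl
    rw [← hψD, hψD', Fin.sum_univ_eq_sum_range
      (fun m => w ^ m * Polynomial.eval k (D.coeff m)) (l + 1)]
    exact Finset.sum_congr rfl fun m _ => (mul_comm _ _)
  · -- R₁ = -R₀'
    set V : Matrix (Fin N) (Fin N) (Polynomial (Polynomial ℂ)) := Mk.map chi with hV
    have hdetV : V.det = chi Mk.det := by
      rw [RingHom.map_det chi Mk, RingHom.mapMatrix_apply]
    set Xd : Matrix (Fin N) (Fin N) (Polynomial (Polynomial ℂ)) :=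
      Matrix.diagonal (fun i => Polynomial.C (Polynomial.C (x i))) with hXd
    have hV' : ∀ i j, V i j = chi (Mk i j) := fun i j => rfl
    clear_value Mk big D V Xd
    have hkey : ∀ i j, big i j = V i j
        + Polynomial.X * (V i j * Polynomial.C (Polynomial.C (x j))
          - Polynomial.C (Polynomial.C (x i)) * V i j) := by
      intro i j
      rw [hbig', hV' i j]
      by_cases hij : i = j
      · subst hij
        have hFii : F i i = 2 := by rw [hFa i i]; exact hba i
        have hz : chi (Mk i i) * Polynomial.C (Polynomial.C (x i))
            - Polynomial.C (Polynomial.C (x i)) * chi (Mk i i) = 0 := by ring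
        rw [hz, mul_zero, add_zero, hMkd i, hFii]
        simp only [_root_.map_add, _root_.map_mul, chi_C, chi_X]
        ring
      · have hAij : A i j * (x j - x i) = -(F i j) := by
          rw [hAa i j, if_neg hij]
          have hne : x i - x j ≠ 0 := sub_ne_zero.mpr (hx i j hij)
          field_simp
          ring
        rw [hMko i j hij, chi_C]
        have hb : Polynomial.C (Polynomial.C (A i j)) * Polynomial.C (Polynomial.C (x j))
            - Polynomial.C (Polynomial.C (x i)) * Polynomial.C (Polynomial.C (A i j))
            = Polynomial.C (Polynomial.C (A i j * (x j - x i))) := by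
          simp only [_root_.map_mul, _root_.map_sub]
          ring
        rw [hb, hAij]
        simp only [map_neg]
        ring
    -- conjugate by (1 ∓ Y·diag(x)) and compare modulo Y²
    set U : Matrix (Fin N) (Fin N) (Polynomial (Polynomial ℂ)) :=
      Matrix.diagonal (fun i => 1 - Polynomial.X * Polynomial.C (Polynomial.C (x i))) with hU
    set Wm : Matrix (Fin N) (Fin N) (Polynomial (Polynomial ℂ)) :=
      Matrix.diagonal (fun i => 1 + Polynomial.X * Polynomial.C (Polynomial.C (x i))) with hWm
    have h1 : (Polynomial.X : Polynomial (Polynomial ℂ)) ^ 2 ∣ big.det - (U * V * Wm).det := by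
      refine dvd_det_sub _ _ _ fun i j => ?_
      refine ⟨Polynomial.C (Polynomial.C (x i)) * V i j * Polynomial.C (Polynomial.C (x j)), ?_⟩
      have hUV : (U * V * Wm) i j
          = (1 - Polynomial.X * Polynomial.C (Polynomial.C (x i))) * V i j
            * (1 + Polynomial.X * Polynomial.C (Polynomial.C (x j))) := by
        rw [Matrix.mul_diagonal, Matrix.diagonal_mul]
      rw [hUV, hkey i j]
      ring
    have h2 : (Polynomial.X : Polynomial (Polynomial ℂ)) ^ 2 ∣ (U * Wm).det - 1 := by
      have hUW : U * Wm = Matrix.diagonal (fun i =>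
          (1 - Polynomial.X * Polynomial.C (Polynomial.C (x i)))
          * (1 + Polynomial.X * Polynomial.C (Polynomial.C (x i)))) := by
        rw [hU, hWm, Matrix.diagonal_mul_diagonal]
      have := dvd_det_sub ((Polynomial.X : Polynomial (Polynomial ℂ)) ^ 2)
        (U * Wm) (1 : Matrix (Fin N) (Fin N) (Polynomial (Polynomial ℂ))) ?_
      · simp only [Matrix.det_one] at this
        exact this
      · intro i j
        rw [hUW]
        by_cases hij : i = j
        · subst hij
          refine ⟨-(Polynomial.C (Polynomial.C (x i)) * Polynomial.C (Polynomial.C (x i))), ?_⟩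
          simp only [Matrix.diagonal_apply_eq, Matrix.one_apply_eq]
          ring
        · simp [Matrix.diagonal_apply_ne _ hij, Matrix.one_apply_ne hij]
    have hdetcomm : (U * V * Wm).det - V.det = V.det * ((U * Wm).det - 1) := by
      rw [Matrix.det_mul, Matrix.det_mul, Matrix.det_mul]
      ring
    have hdvd : (Polynomial.X : Polynomial (Polynomial ℂ)) ^ 2 ∣ D - V.det := by
      have h3 : D - V.det = (big.det - (U * V * Wm).det) + V.det * ((U * Wm).det - 1) := by
        rw [← hdetcomm, hD]
        ring
      rw [h3]
      exact dvd_add h1 (Dvd.dvd.mul_left h2 _)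
    obtain ⟨g, hg⟩ := hdvd
    have hcoeff1 : D.coeff 1 = V.det.coeff 1 := by
      have h1 := congrArg (fun P => Polynomial.coeff P 1) hg
      simp only [Polynomial.coeff_sub] at h1
      rw [pow_two, mul_assoc] at h1
      have h2 : (Polynomial.X * (Polynomial.X * g)).coeff 1 = 0 := by
        have h3 := Polynomial.coeff_X_mul (Polynomial.X * g) 0
        simpa [Polynomial.mul_coeff_zero] using h3
      rw [h2] at h1
      exact sub_eq_zero.mp h1
    have e1 : ((⟨1, by omega⟩ : Fin (l + 1)) : ℕ) = 1 := rfl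
    have e0 : ((0 : Fin (l + 1)) : ℕ) = 0 := rfl
    show D.coeff _ = -Polynomial.derivative (D.coeff _)
    rw [e1, e0, hcoeff1, hdetV, chi_coeff_one, hD0]
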